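/- arXiv:2603.21239 — 2 statements merged into one kernel-verified Lean document; each statement's English description precedes it below -/
import Mathlib

section
/- Let F be a finite field, let n > 2, and let R = M_n(F). Let U be a subgroup of GL_n(F) with -I_n ∈ U such that the Cayley graph Γ(R,U) is connected, and let S ⊆ R satisfy 0 ∉ S, U S U = S, S ≠ ∅, and S ≠ R \ {0}. Then the Cayley graph Γ(R,S) is prime. -/
/-- The Cayley graph `Γ(R,S)` of a ring `R` with connection set `S`. -/
def cayleyGraph {R : Type*} [Ring R] (S : Set R) : SimpleGraph R :=
  SimpleGraph.fromRel (fun a b => a - b ∈ S)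

/-- The image in `R` of a subgroup `U` of the unit group `Rˣ`. -/
def unitsSet (R : Type*) [Ring R] (U : Subgroup Rˣ) : Set R :=
  (fun u : Rˣ => (u : R)) '' (U : Set Rˣ)

/-- `X` is a homogeneous set of `G`. -/
def IsHomogeneousSet {V : Type*} (G : SimpleGraph V) (X : Set V) : Prop :=
  ∀ v ∉ X, (∀ x ∈ X, G.Adj v x) ∨ (∀ x ∈ X, ¬ G.Adj v x)

/-- A graph on a finite vertex set is prime if it has no nontrivial homogeneous set. -/
def IsPrimeGraph {V : Type*} [Fintype V] (G : SimpleGraph V) : Prop :=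
  ¬ ∃ X : Set V, IsHomogeneousSet G X ∧ 2 ≤ X.ncard ∧ X.ncard < Fintype.card V

open Set

section Basics

variable {R : Type*} [Ring R]

lemma cayley_adj {S : Set R} (hsym : ∀ s ∈ S, -s ∈ S) {a b : R} :
    (cayleyGraph S).Adj a b ↔ a ≠ b ∧ a - b ∈ S := by
  show (SimpleGraph.fromRel _).Adj a b ↔ _
  rw [SimpleGraph.fromRel_adj]
  constructor
  · rintro ⟨h, h2 | h2⟩
    · exact ⟨h, h2⟩
    · exact ⟨h, by simpa using hsym _ h2⟩
  · rintro ⟨h, h2⟩; exact ⟨h, Or.inl h2⟩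

/-- Build an `AddSubgroup` from a set containing `0` closed under subtraction. -/
def subgroupOfSet (A : Set R) (h0 : (0 : R) ∈ A)
    (hsub : ∀ a ∈ A, ∀ b ∈ A, a - b ∈ A) : AddSubgroup R where
  carrier := A
  zero_mem' := h0
  add_mem' := fun {a b} ha hb => by
    have h1 : (0 : R) - b ∈ A := hsub 0 h0 b hb
    have h2 := hsub a ha _ h1
    simpa using h2
  neg_mem' := fun {a} ha => by simpa using hsub 0 h0 a ha

@[simp] lemma mem_subgroupOfSet {A : Set R} {h0 : (0 : R) ∈ A}
    {hsub : ∀ a ∈ A, ∀ b ∈ A, a - b ∈ A} {x : R} :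
    x ∈ subgroupOfSet A h0 hsub ↔ x ∈ A := Iff.rfl

end Basics

section C
variable {R : Type*} [Ring R] {U : Subgroup Rˣ}

lemma biinv_dichotomy
    (hgen : AddSubgroup.closure (unitsSet R U) = ⊤)
    (hsimple : ∀ W : AddSubgroup R, (∀ r : R, ∀ w ∈ W, r * w ∈ W) →
      (∀ r : R, ∀ w ∈ W, w * r ∈ W) → W = ⊥ ∨ W = ⊤)
    (W : AddSubgroup R)
    (hl : ∀ u : Rˣ, u ∈ U → ∀ w ∈ W, (u : R) * w ∈ W)
    (hr : ∀ u : Rˣ, u ∈ U → ∀ w ∈ W, w * (u : R) ∈ W) : W = ⊥ ∨ W = ⊤ := by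
  apply hsimple
  · intro r w hw
    have hrmem : r ∈ AddSubgroup.closure (unitsSet R U) := by rw [hgen]; trivial
    induction hrmem using AddSubgroup.closure_induction with
    | mem x hx => obtain ⟨u, hu, rfl⟩ := hx; exact hl u hu w hw
    | zero => simpa using W.zero_mem
    | add x y hx hy ihx ihy => rw [add_mul]; exact W.add_mem ihx ihy
    | neg x hx ihx => rw [neg_mul]; exact W.neg_mem ihx
  · intro r w hw
    have hrmem : r ∈ AddSubgroup.closure (unitsSet R U) := by rw [hgen]; trivial
    induction hrmem using AddSubgroup.closure_induction with
    | mem x hx => obtain ⟨u, hu, rfl⟩ := hx; exact hr u hu w hw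
    | zero => simpa using W.zero_mem
    | add x y hx hy ihx ihy => rw [mul_add]; exact W.add_mem ihx ihy
    | neg x hx ihx => rw [mul_neg]; exact W.neg_mem ihx

lemma hcancel (u v : Rˣ) (x : R) :
    ((u⁻¹ : Rˣ) : R) * ((u : R) * x * (v : R)) * ((v⁻¹ : Rˣ) : R) = x := by
  calc ((u⁻¹ : Rˣ) : R) * ((u : R) * x * (v : R)) * ((v⁻¹ : Rˣ) : R)
      = (((u⁻¹ : Rˣ) : R) * (u : R)) * x * ((v : R) * ((v⁻¹ : Rˣ) : R)) := by
        simp only [mul_assoc]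
    _ = x := by simp

lemma smul_mem_iff {S : Set R}
    (hstab : ∀ u₁ ∈ U, ∀ u₂ ∈ U, ∀ s ∈ S, ((u₁ : Rˣ) : R) * s * ((u₂ : Rˣ) : R) ∈ S)
    {u v : Rˣ} (hu : u ∈ U) (hv : v ∈ U) (s : R) :
    (u : R) * s * (v : R) ∈ S ↔ s ∈ S := by
  constructor
  · intro h
    have := hstab u⁻¹ (inv_mem hu) v⁻¹ (inv_mem hv) _ h
    rwa [hcancel] at this
  · exact fun h => hstab u hu v hv s h

lemma subgroup_case [Fintype R]
    (hU : -1 ∈ U)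
    (hgen : AddSubgroup.closure (unitsSet R U) = ⊤)
    (hsimple : ∀ W : AddSubgroup R, (∀ r : R, ∀ w ∈ W, r * w ∈ W) →
      (∀ r : R, ∀ w ∈ W, w * r ∈ W) → W = ⊥ ∨ W = ⊤)
    {S : Set R} (h0 : (0 : R) ∉ S)
    (hstab : ∀ u₁ ∈ U, ∀ u₂ ∈ U, ∀ s ∈ S, ((u₁ : Rˣ) : R) * s * ((u₂ : Rˣ) : R) ∈ S)
    (hSne : S.Nonempty) (hSnc : S ≠ Set.univ \ {0})
    (H₀ : Set R) (h00 : (0 : R) ∈ H₀)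
    (hsubH : ∀ a ∈ H₀, ∀ b ∈ H₀, a - b ∈ H₀)
    (hneH : ∃ x ∈ H₀, x ≠ 0) (hprH : H₀ ≠ univ)
    (hhom : IsHomogeneousSet (cayleyGraph S) H₀) : False := by
  classical
  have hsym : ∀ s ∈ S, -s ∈ S := by
    intro s hs
    have := hstab (-1) hU 1 U.one_mem s hs
    simpa using this
  set T : Set R := {x | x ≠ 0 ∧ x ∉ S} with hT
  have hT0 : (0 : R) ∉ T := fun h => h.1 rfl
  have hTsym : ∀ t ∈ T, -t ∈ T := by
    rintro t ⟨ht0, htS⟩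
    refine ⟨by simpa using ht0, fun h => htS ?_⟩
    simpa using hsym _ h
  have hTstab : ∀ u ∈ U, ∀ v ∈ U, ∀ s : R, (u : R) * s * (v : R) ∈ T ↔ s ∈ T := by
    intro u hu v hv s
    have h1 : (u : R) * s * (v : R) = 0 ↔ s = 0 := by
      constructor
      · intro h
        have := congrArg (fun z => ((u⁻¹ : Rˣ) : R) * z * ((v⁻¹ : Rˣ) : R)) h
        simpa [hcancel u v s] using this
      · intro h; simp [h]
    constructor
    · rintro ⟨hne, hns⟩
      exact ⟨fun h => hne (by simp [h]), fun h => hns ((smul_mem_iff hstab hu hv s).mpr h)⟩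
    · rintro ⟨hne, hns⟩
      exact ⟨fun h => hne (h1.mp h), fun h => hns ((smul_mem_iff hstab hu hv s).mp h)⟩
  -- the family of conjugated copies of H₀
  set C : Rˣ → Rˣ → Set R := fun u v => (fun x => (u : R) * x * (v : R)) '' H₀ with hCdef
  have hC0 : ∀ u v : Rˣ, (0 : R) ∈ C u v := fun u v => ⟨0, h00, by simp⟩
  have hCsub : ∀ (u v : Rˣ), ∀ a ∈ C u v, ∀ b ∈ C u v, a - b ∈ C u v := by
    rintro u v a ⟨x, hx, rfl⟩ b ⟨y, hy, rfl⟩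
    exact ⟨x - y, hsubH x hx y hy, by simp [mul_sub, sub_mul]⟩
  have hCneg : ∀ (u v : Rˣ), ∀ a ∈ C u v, -a ∈ C u v := fun u v a ha => by
    simpa using hCsub u v 0 (hC0 u v) a ha
  have hCadd : ∀ (u v : Rˣ), ∀ a ∈ C u v, ∀ b ∈ C u v, a + b ∈ C u v := fun u v a ha b hb => by
    simpa using hCsub u v a ha (-b) (hCneg u v b hb)
  have hCinj : ∀ u v : Rˣ, Function.Injective (fun x : R => (u : R) * x * (v : R)) := by
    intro u v x y hxy
    simp only at hxy
    have := congrArg (fun z => ((u⁻¹ : Rˣ) : R) * z * ((v⁻¹ : Rˣ) : R)) hxy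
    simpa [hcancel] using this
  have hC11 : C 1 1 = H₀ := by
    rw [hCdef]
    ext z
    simp
  have hCcard : ∀ u v : Rˣ, (C u v).ncard = H₀.ncard := fun u v =>
    ncard_image_of_injective _ (hCinj u v)
  -- base homogeneity consequences
  have hSmono0 : ∀ a ∈ S, a ∉ H₀ → ∀ h ∈ H₀, a + h ∈ S := by
    intro a haS haH h hh
    rcases hhom a haH with hall | hnone
    · have hadj := hall (-h) (by simpa using hsubH 0 h00 h hh)
      rw [cayley_adj hsym] at hadj
      have := hadj.2
      rwa [sub_neg_eq_add] at this
    · exfalso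
      refine hnone 0 h00 ?_
      rw [cayley_adj hsym]
      exact ⟨fun h' => h0 (h' ▸ haS), by simpa using haS⟩
  have hTmono0 : ∀ a ∈ T, a ∉ H₀ → ∀ h ∈ H₀, a + h ∈ T := by
    intro a haT haH h hh
    obtain ⟨ha0, haS⟩ := haT
    rcases hhom a haH with hall | hnone
    · exfalso
      have := hall 0 h00
      rw [cayley_adj hsym] at this
      exact haS (by simpa using this.2)
    · constructor
      · intro h'
        apply haH
        rw [eq_neg_of_add_eq_zero_left h']
        simpa using hsubH 0 h00 h hh
      · intro hS
        refine hnone (-h) (by simpa using hsubH 0 h00 h hh) ?_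
        rw [cayley_adj hsym]
        refine ⟨?_, by rwa [sub_neg_eq_add]⟩
        intro h'
        apply haH
        rw [h']
        simpa using hsubH 0 h00 h hh
  -- transported mono
  have mono_transport : ∀ P : Set R,
      (∀ a ∈ P, a ∉ H₀ → ∀ h ∈ H₀, a + h ∈ P) →
      (∀ u ∈ U, ∀ v ∈ U, ∀ s : R, (u : R) * s * (v : R) ∈ P ↔ s ∈ P) →
      ∀ u ∈ U, ∀ v ∈ U, ∀ a ∈ P, a ∉ C u v → ∀ h ∈ C u v, a + h ∈ P := by
    intro P hbase hinv u hu v hv a haP haC h hhC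
    obtain ⟨x, hx, rfl⟩ := hhC
    set a₀ := ((u⁻¹ : Rˣ) : R) * a * ((v⁻¹ : Rˣ) : R) with ha₀
    have hback : (u : R) * a₀ * (v : R) = a := by
      rw [ha₀]
      have := hcancel u⁻¹ v⁻¹ a
      simpa using this
    have ha₀P : a₀ ∈ P := by
      rw [← hback] at haP
      exact (hinv u hu v hv a₀).mp haP
    have ha₀H : a₀ ∉ H₀ := by
      intro hmem
      exact haC ⟨a₀, hmem, hback⟩
    have hstep := hbase a₀ ha₀P ha₀H x hx
    have h2 := (hinv u hu v hv (a₀ + x)).mpr hstep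
    have heq : (u : R) * (a₀ + x) * (v : R) = a + (u : R) * x * (v : R) := by
      rw [mul_add, add_mul, hback]
    rwa [heq] at h2
  have hSmono : ∀ u ∈ U, ∀ v ∈ U, ∀ a ∈ S, a ∉ C u v → ∀ h ∈ C u v, a + h ∈ S :=
    mono_transport S hSmono0 (fun u hu v hv s => smul_mem_iff hstab hu hv s)
  have hTmono : ∀ u ∈ U, ∀ v ∈ U, ∀ a ∈ T, a ∉ C u v → ∀ h ∈ C u v, a + h ∈ T :=
    mono_transport T hTmono0 hTstab
  -- intersection of the family is trivial
  have hZINT : ∀ x : R, x ≠ 0 → ∃ u, u ∈ U ∧ ∃ v, v ∈ U ∧ x ∉ C u v := by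
    intro x hx
    by_contra hcon
    push_neg at hcon
    set Wset : Set R := {y | ∀ u ∈ U, ∀ v ∈ U, y ∈ C u v} with hWset
    have hW0 : (0 : R) ∈ Wset := fun u hu v hv => hC0 u v
    have hWsub : ∀ a ∈ Wset, ∀ b ∈ Wset, a - b ∈ Wset :=
      fun a ha b hb u hu v hv => hCsub u v a (ha u hu v hv) b (hb u hu v hv)
    set W : AddSubgroup R := subgroupOfSet Wset hW0 hWsub with hWdef
    have hWl : ∀ w : Rˣ, w ∈ U → ∀ y ∈ W, (w : R) * y ∈ W := by
      intro w hw y hy u hu v hv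
      obtain ⟨x₀, hx₀, hx₀eq⟩ := hy (w⁻¹ * u) (mul_mem (inv_mem hw) hu) v hv
      refine ⟨x₀, hx₀, ?_⟩
      rw [← hx₀eq]
      push_cast
      simp [mul_assoc]
    have hWr : ∀ w : Rˣ, w ∈ U → ∀ y ∈ W, y * (w : R) ∈ W := by
      intro w hw y hy u hu v hv
      obtain ⟨x₀, hx₀, hx₀eq⟩ := hy u hu (v * w⁻¹) (mul_mem hv (inv_mem hw))
      refine ⟨x₀, hx₀, ?_⟩
      rw [← hx₀eq]
      push_cast
      simp [mul_assoc]
    rcases biinv_dichotomy hgen hsimple W hWl hWr with hbot | htop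
    · have hxW : x ∈ W := fun u hu v hv => hcon u hu v hv
      rw [hbot] at hxW
      exact hx (by simpa using hxW)
    · obtain ⟨y, hy⟩ : ∃ y : R, y ∉ H₀ := by
        by_contra hcon2
        push_neg at hcon2
        exact hprH (eq_univ_of_forall hcon2)
      have hyW : y ∈ W := by rw [htop]; trivial
      have := hyW 1 U.one_mem 1 U.one_mem
      rw [hC11] at this
      exact hy this
  -- not-subset extraction
  have hgpt : ∀ (u v u' v' : Rˣ) (x : R), x ∈ C u v → x ∉ C u' v' →
      ∃ g, g ∈ C u' v' ∧ g ∉ C u v := by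
    intro u v u' v' x hx hx'
    by_contra hcon
    push_neg at hcon
    have hsubs : C u' v' ⊆ C u v := hcon
    have heq := Set.eq_of_subset_of_ncard_le hsubs
      (by rw [hCcard, hCcard]) (toFinite _)
    rw [← heq] at hx
    exact hx' hx
  -- equal colour within one member of the family
  have eq_aux : ∀ P : Set R,
      (∀ u ∈ U, ∀ v ∈ U, ∀ a ∈ P, a ∉ C u v → ∀ h ∈ C u v, a + h ∈ P) →
      ∀ (u v u' v' : Rˣ), u ∈ U → v ∈ U → u' ∈ U → v' ∈ U →
      ∀ x ∈ C u v, ∀ y ∈ C u v, x ∉ C u' v' → y ∉ C u' v' → (x ∈ P ↔ y ∈ P) := by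
    intro P hmono u v u' v' hu hv hu' hv' x hx y hy hx' hy'
    obtain ⟨g, hgB, hgA⟩ := hgpt u v u' v' x hx hx'
    have step1 : ∀ q : R, q ∉ C u' v' → (q ∈ P ↔ q + g ∈ P) := by
      intro q hq
      constructor
      · intro hqP; exact hmono u' hu' v' hv' q hqP hq g hgB
      · intro hqP
        have hqg : q + g ∉ C u' v' := fun hmem => hq (by
          have := hCsub u' v' _ hmem g hgB
          simpa using this)
        have := hmono u' hu' v' hv' (q + g) hqP hqg (-g) (hCneg u' v' g hgB)
        rwa [show q + g + -g = q by abel] at this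
    have step2 : x + g ∈ P ↔ y + g ∈ P := by
      have hxgA : x + g ∉ C u v := fun hmem => hgA (by
        have := hCsub u v _ hmem x hx
        simpa using this)
      have hygA : y + g ∉ C u v := fun hmem => hgA (by
        have := hCsub u v _ hmem y hy
        simpa using this)
      constructor
      · intro hp
        have := hmono u hu v hv (x + g) hp hxgA (y - x) (hCsub u v y hy x hx)
        rwa [show x + g + (y - x) = y + g by abel] at this
      · intro hp
        have := hmono u hu v hv (y + g) hp hygA (x - y) (hCsub u v x hx y hy)
        rwa [show y + g + (x - y) = x + g by abel] at this
    rw [step1 x hx', step2, ← step1 y hy']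
  have hEQ : ∀ P : Set R,
      (∀ u ∈ U, ∀ v ∈ U, ∀ a ∈ P, a ∉ C u v → ∀ h ∈ C u v, a + h ∈ P) →
      ∀ u ∈ U, ∀ v ∈ U, ∀ x ∈ C u v, ∀ y ∈ C u v, x ≠ 0 → y ≠ 0 → (x ∈ P ↔ y ∈ P) := by
    intro P hmono u hu v hv x hx y hy hx0 hy0
    obtain ⟨u₁, hu₁, v₁, hv₁, hxB⟩ := hZINT x hx0
    by_cases hyB : y ∈ C u₁ v₁
    · obtain ⟨u₂, hu₂, v₂, hv₂, hyB₂⟩ := hZINT y hy0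
      by_cases hxB₂ : x ∈ C u₂ v₂
      · have iff1 : x ∈ P ↔ x + y ∈ P := by
          constructor
          · intro hp; exact hmono u₁ hu₁ v₁ hv₁ x hp hxB y hyB
          · intro hp
            have hz : x + y ∉ C u₁ v₁ := fun hmem => hxB (by
              have := hCsub u₁ v₁ _ hmem y hyB
              simpa using this)
            have := hmono u₁ hu₁ v₁ hv₁ (x + y) hp hz (-y) (hCneg u₁ v₁ y hyB)
            rwa [show x + y + -y = x by abel] at this
        have iff2 : y ∈ P ↔ x + y ∈ P := by
          constructor
          · intro hp
            have := hmono u₂ hu₂ v₂ hv₂ y hp hyB₂ x hxB₂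
            rwa [add_comm] at this
          · intro hp
            have hz : x + y ∉ C u₂ v₂ := fun hmem => hyB₂ (by
              have := hCsub u₂ v₂ _ hmem x hxB₂
              simpa using this)
            have := hmono u₂ hu₂ v₂ hv₂ (x + y) hp hz (-x) (hCneg u₂ v₂ x hxB₂)
            rwa [show x + y + -x = y by abel] at this
        rw [iff1, iff2]
      · exact eq_aux P hmono u v u₂ v₂ hu hv hu₂ hv₂ x hx y hy hxB₂ hyB₂
    · exact eq_aux P hmono u v u₁ v₁ hu hv hu₁ hv₁ x hx y hy hxB hyB
  -- stabilisation
  have stab_one : ∀ P : Set R, (0 : R) ∉ P →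
      (∀ u ∈ U, ∀ v ∈ U, ∀ a ∈ P, a ∉ C u v → ∀ h ∈ C u v, a + h ∈ P) →
      ∀ u ∈ U, ∀ v ∈ U, ∀ h ∈ C u v, -h ∉ P → ∀ a ∈ P, a + h ∈ P := by
    intro P hP0 hmono u hu v hv h hh hnh a haP
    by_cases haC : a ∈ C u v
    · have hane : a ≠ 0 := fun h' => hP0 (h' ▸ haP)
      have hahC : a + h ∈ C u v := hCadd u v a haC h hh
      have hah0 : a + h ≠ 0 := by
        intro h'
        exact hnh (by rwa [eq_neg_of_add_eq_zero_left h'] at haP)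
      exact (hEQ P hmono u hu v hv a haC (a + h) hahC hane hah0).mp haP
    · exact hmono u hu v hv a haP haC h hh
  -- stabiliser subgroups
  have stabset_neg : ∀ (P : Set R) (k : R), (∀ a ∈ P, a + k ∈ P) →
      ∀ a ∈ P, a + -k ∈ P := by
    intro P k hk
    have himg : (fun a => a + k) '' P = P := by
      apply Set.eq_of_subset_of_ncard_le
      · rintro _ ⟨a, ha, rfl⟩; exact hk a ha
      · rw [Set.ncard_image_of_injective _ (add_left_injective k)]
      · exact toFinite _
    intro a ha
    rw [← himg] at ha
    obtain ⟨b, hb, hbe⟩ := ha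
    simp only at hbe
    have hbeq : a + -k = b := by rw [← hbe]; abel
    rw [hbeq]
    exact hb
  have KSsub : ∀ k₁ ∈ {k : R | ∀ a ∈ S, a + k ∈ S}, ∀ k₂ ∈ {k : R | ∀ a ∈ S, a + k ∈ S},
      k₁ - k₂ ∈ {k : R | ∀ a ∈ S, a + k ∈ S} := by
    intro k₁ h₁ k₂ h₂ a ha
    have := stabset_neg S k₂ h₂ (a + k₁) (h₁ a ha)
    rwa [show a + k₁ + -k₂ = a + (k₁ - k₂) by abel] at this
  have KTsub : ∀ k₁ ∈ {k : R | ∀ a ∈ T, a + k ∈ T}, ∀ k₂ ∈ {k : R | ∀ a ∈ T, a + k ∈ T},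
      k₁ - k₂ ∈ {k : R | ∀ a ∈ T, a + k ∈ T} := by
    intro k₁ h₁ k₂ h₂ a ha
    have := stabset_neg T k₂ h₂ (a + k₁) (h₁ a ha)
    rwa [show a + k₁ + -k₂ = a + (k₁ - k₂) by abel] at this
  set KS : AddSubgroup R := subgroupOfSet {k : R | ∀ a ∈ S, a + k ∈ S}
    (by intro a ha; simpa using ha) KSsub with hKS
  set KT : AddSubgroup R := subgroupOfSet {k : R | ∀ a ∈ T, a + k ∈ T}
    (by intro a ha; simpa using ha) KTsub with hKT
  -- generators lie in the sup
  have hgensup : ∀ u ∈ U, ∀ v ∈ U, ∀ h ∈ C u v, h ∈ KS ⊔ KT := by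
    intro u hu v hv h hh
    by_cases hnh : -h ∈ S
    · apply AddSubgroup.mem_sup_right
      show ∀ a ∈ T, a + h ∈ T
      apply stab_one T hT0 hTmono u hu v hv h hh
      intro hmem
      exact hmem.2 hnh
    · apply AddSubgroup.mem_sup_left
      show ∀ a ∈ S, a + h ∈ S
      exact stab_one S h0 hSmono u hu v hv h hh hnh
  -- the family generates everything
  set Jset : Set R := ⋃ (u : Rˣ) (_ : u ∈ U) (v : Rˣ) (_ : v ∈ U), C u v with hJset
  set Z : AddSubgroup R := AddSubgroup.closure Jset with hZdef
  have hJl : ∀ w : Rˣ, w ∈ U → ∀ y ∈ Z, (w : R) * y ∈ Z := by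
    intro w hw y hy
    induction hy using AddSubgroup.closure_induction with
    | mem x hx =>
      apply AddSubgroup.subset_closure
      simp only [hJset, mem_iUnion] at hx ⊢
      obtain ⟨u, hu, v, hv, x₀, hx₀, rfl⟩ := hx
      refine ⟨w * u, mul_mem hw hu, v, hv, x₀, hx₀, ?_⟩
      push_cast
      simp [mul_assoc]
    | zero => simpa using Z.zero_mem
    | add a b ha hb iha ihb => rw [mul_add]; exact Z.add_mem iha ihb
    | neg a ha iha => rw [mul_neg]; exact Z.neg_mem iha
  have hJr : ∀ w : Rˣ, w ∈ U → ∀ y ∈ Z, y * (w : R) ∈ Z := by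
    intro w hw y hy
    induction hy using AddSubgroup.closure_induction with
    | mem x hx =>
      apply AddSubgroup.subset_closure
      simp only [hJset, mem_iUnion] at hx ⊢
      obtain ⟨u, hu, v, hv, x₀, hx₀, rfl⟩ := hx
      refine ⟨u, hu, v * w, mul_mem hv hw, x₀, hx₀, ?_⟩
      push_cast
      simp [mul_assoc]
    | zero => simpa using Z.zero_mem
    | add a b ha hb iha ihb => rw [add_mul]; exact Z.add_mem iha ihb
    | neg a ha iha => rw [neg_mul]; exact Z.neg_mem iha
  have hZtop : Z = ⊤ := by
    rcases biinv_dichotomy hgen hsimple Z hJl hJr with hbot | htop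
    · exfalso
      obtain ⟨x₀, hx₀H, hx₀0⟩ := hneH
      have hx₀Z : x₀ ∈ Z := by
        apply AddSubgroup.subset_closure
        simp only [hJset, mem_iUnion]
        exact ⟨1, U.one_mem, 1, U.one_mem, by rw [hC11]; exact hx₀H⟩
      rw [hbot] at hx₀Z
      exact hx₀0 (by simpa using hx₀Z)
    · exact htop
  have hsuptop : KS ⊔ KT = ⊤ := by
    rw [eq_top_iff, ← hZtop, hZdef]
    rw [AddSubgroup.closure_le]
    intro x hx
    simp only [hJset, mem_iUnion] at hx
    obtain ⟨u, hu, v, hv, hxC⟩ := hx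
    exact hgensup u hu v hv x hxC
  -- T is nonempty
  have hTne : T.Nonempty := by
    rcases Set.eq_empty_or_nonempty T with hemp | hne
    · exfalso
      apply hSnc
      ext x
      constructor
      · intro hx
        exact ⟨trivial, fun h => h0 (by rwa [mem_singleton_iff.mp h] at hx)⟩
      · rintro ⟨-, hx0⟩
        by_contra hxS
        have : x ∈ T := ⟨fun h => hx0 (by simp [h]), hxS⟩
        rw [hemp] at this
        exact this
    · exact hne
  -- endgame
  by_cases hKSne : ∃ a ∈ KS, a ≠ (0 : R)
  · by_cases hKTne : ∃ b ∈ KT, b ≠ (0 : R)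
    · obtain ⟨a, haK, ha0⟩ := hKSne
      obtain ⟨b, hbK, hb0⟩ := hKTne
      have haS : a ∉ S := by
        intro haS
        have hnegK : ∀ x ∈ S, x + -a ∈ S := KS.neg_mem haK
        have := hnegK a haS
        simp only [add_neg_cancel] at this
        exact h0 this
      have haT : a ∈ T := ⟨ha0, haS⟩
      have hbT : b ∉ T := by
        intro hbT
        have hnegK : ∀ x ∈ T, x + -b ∈ T := KT.neg_mem hbK
        have := hnegK b hbT
        simp only [add_neg_cancel] at this
        exact hT0 this
      have hbS : b ∈ S := by
        by_contra hbS
        exact hbT ⟨hb0, hbS⟩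
      have h1 : b + a ∈ S := haK b hbS
      have h2 : a + b ∈ T := hbK a haT
      rw [add_comm] at h2
      exact h2.2 h1
    · -- KT trivial, so KS = ⊤
      push_neg at hKTne
      have hKStop : ∀ k : R, ∀ a ∈ S, a + k ∈ S := by
        intro k
        have hk : k ∈ KS ⊔ KT := by rw [hsuptop]; trivial
        rw [AddSubgroup.mem_sup] at hk
        obtain ⟨y, hy, z, hz, rfl⟩ := hk
        have hz0 : z = 0 := hKTne z hz
        rw [hz0, add_zero]
        exact hy
      obtain ⟨s, hs⟩ := hSne
      have := hKStop (-s) s hs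
      simp only [add_neg_cancel] at this
      exact h0 this
  · -- KS trivial, so KT = ⊤
    push_neg at hKSne
    have hKTtop : ∀ k : R, ∀ a ∈ T, a + k ∈ T := by
      intro k
      have hk : k ∈ KS ⊔ KT := by rw [hsuptop]; trivial
      rw [AddSubgroup.mem_sup] at hk
      obtain ⟨y, hy, z, hz, rfl⟩ := hk
      have hy0 : y = 0 := hKSne y hy
      rw [hy0, zero_add]
      exact hz
    obtain ⟨t, ht⟩ := hTne
    have := hKTtop (-t) t ht
    simp only [add_neg_cancel] at this
    exact hT0 this

end C


section NewBasics
variable {R : Type*} [Ring R]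

lemma isHom_image {V : Type*} {G : SimpleGraph V} {f : V → V} (hf : Function.Surjective f)
    (he : ∀ a b, G.Adj (f a) (f b) ↔ G.Adj a b) {X : Set V}
    (hX : IsHomogeneousSet G X) : IsHomogeneousSet G (f '' X) := by
  intro v hv
  obtain ⟨w, rfl⟩ := hf v
  have hw : w ∉ X := fun h => hv ⟨w, h, rfl⟩
  rcases hX w hw with h | h
  · left; rintro x ⟨y, hy, rfl⟩; exact (he w y).2 (h y hy)
  · right; rintro x ⟨y, hy, rfl⟩ hadj; exact h y hy ((he w y).1 hadj)

lemma isHom_union {V : Type*} {G : SimpleGraph V} {X Y : Set V}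
    (hX : IsHomogeneousSet G X) (hY : IsHomogeneousSet G Y)
    (hXY : (X ∩ Y).Nonempty) : IsHomogeneousSet G (X ∪ Y) := by
  obtain ⟨w, hwX, hwY⟩ := hXY
  intro v hv
  have hvX : v ∉ X := fun h => hv (Or.inl h)
  have hvY : v ∉ Y := fun h => hv (Or.inr h)
  rcases hX v hvX with hx | hx <;> rcases hY v hvY with hy | hy
  · left; rintro x (h | h); exacts [hx x h, hy x h]
  · exact absurd (hx w hwX) (hy w hwY)
  · exact absurd (hy w hwY) (hx w hwX)
  · right; rintro x (h | h); exacts [hx x h, hy x h]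

lemma walk_cross {V : Type*} {G : SimpleGraph V} {M : Set V} {a b : V}
    (w : G.Walk a b) (ha : a ∈ M) (hb : b ∉ M) : ∃ x ∈ M, ∃ y, y ∉ M ∧ G.Adj x y := by
  induction w with
  | nil => exact absurd ha hb
  | @cons u v c h p ih =>
    by_cases hc : v ∈ M
    · exact ih hc hb
    · exact ⟨u, ha, v, hc, h⟩

lemma cayley_reachable {S₀ : Set R} (hgen : AddSubgroup.closure S₀ = ⊤)
    (h0 : (0 : R) ∉ S₀) (a b : R) : (cayleyGraph S₀).Reachable a b := by
  set G := cayleyGraph S₀ with hG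
  have key : ∀ d : R, d ∈ AddSubgroup.closure S₀ → ∀ c : R, G.Reachable c (c + d) := by
    intro d hd
    induction hd using AddSubgroup.closure_induction with
    | mem x hx =>
      intro c
      have hadj : G.Adj c (c + x) := by
        rw [hG]
        show (SimpleGraph.fromRel _).Adj _ _
        rw [SimpleGraph.fromRel_adj]
        refine ⟨?_, Or.inr (by simpa using hx)⟩
        intro h
        apply h0
        have : x = 0 := left_eq_add.mp h
        rwa [this] at hx
      exact hadj.reachable
    | zero => intro c; simpa using SimpleGraph.Reachable.refl _
    | add x y hx hy ihx ihy =>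
      intro c
      have h1 := ihx c
      have h2 := ihy (c + x)
      rw [← add_assoc]
      exact h1.trans h2
    | neg x hx ihx =>
      intro c
      have := (ihx (c + -x)).symm
      simpa using this
  have := key (b - a) (by rw [hgen]; trivial) a
  simpa using this

end NewBasics

section Key
variable {R : Type*} [Ring R] [Fintype R] {U : Subgroup Rˣ}

lemma key (hU : -1 ∈ U)
    (hgen : AddSubgroup.closure (unitsSet R U) = ⊤)
    (hsimple : ∀ W : AddSubgroup R, (∀ r : R, ∀ w ∈ W, r * w ∈ W) →
      (∀ r : R, ∀ w ∈ W, w * r ∈ W) → W = ⊥ ∨ W = ⊤)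
    {S : Set R} (h0 : (0 : R) ∉ S)
    (hstab : ∀ u₁ ∈ U, ∀ u₂ ∈ U, ∀ s ∈ S, ((u₁ : Rˣ) : R) * s * ((u₂ : Rˣ) : R) ∈ S)
    (hSne : S.Nonempty) (hSnc : S ≠ Set.univ \ {0})
    (hsmall : S.ncard ≤ {x : R | x ≠ 0 ∧ x ∉ S}.ncard) :
    IsPrimeGraph (cayleyGraph S) := by
  classical
  rintro ⟨X, hhomX, h2X, hltX⟩
  have hsym : ∀ s ∈ S, -s ∈ S := by
    intro s hs
    have := hstab (-1) hU 1 U.one_mem s hs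
    simpa using this
  set T : Set R := {x | x ≠ 0 ∧ x ∉ S} with hT
  set G := cayleyGraph S with hG
  -- counting
  have hcardsum : S.ncard + T.ncard + 1 = Fintype.card R := by
    have hdisj : Disjoint S T := by
      rw [Set.disjoint_left]
      intro a ha hat
      exact hat.2 ha
    have huniv : (univ : Set R) = insert (0 : R) (S ∪ T) := by
      ext x
      simp only [mem_univ, true_iff, mem_insert_iff, mem_union]
      by_cases hx : x = 0
      · left; exact hx
      · by_cases hxs : x ∈ S
        · right; left; exact hxs
        · right; right; exact ⟨hx, hxs⟩
    have h1 : (univ : Set R).ncard = Fintype.card R := by rw [ncard_univ, Nat.card_eq_fintype_card]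
    rw [huniv, Set.ncard_insert_of_notMem ?notmem (toFinite _),
      Set.ncard_union_eq hdisj (toFinite _) (toFinite _)] at h1
    · omega
    case notmem =>
      rintro (h | h)
      · exact h0 h
      · exact h.1 rfl
  -- translation automorphisms
  have hadj_trans : ∀ (t a b : R), G.Adj (a + t) (b + t) ↔ G.Adj a b := by
    intro t a b
    rw [hG, cayley_adj hsym, cayley_adj hsym, show a + t - (b + t) = a - b by abel]
    simp only [ne_eq, add_left_inj]
  have htrans_surj : ∀ t : R, Function.Surjective (fun a : R => a + t) :=
    fun t y => ⟨y - t, by simp⟩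
  obtain ⟨x₀, hx₀⟩ : X.Nonempty := by
    rcases X.eq_empty_or_nonempty with h | h
    · rw [h] at h2X; simp at h2X
    · exact h
  set X' : Set R := (fun a => a + -x₀) '' X with hX'
  have hhomX' : IsHomogeneousSet G X' :=
    isHom_image (htrans_surj (-x₀)) (fun a b => hadj_trans (-x₀) a b) hhomX
  have h0X' : (0 : R) ∈ X' := ⟨x₀, hx₀, by simp⟩
  have hcardX' : X'.ncard = X.ncard :=
    ncard_image_of_injective _ (add_left_injective _)
  have hX'ne : X' ≠ univ := by
    intro h
    rw [h, ncard_univ, Nat.card_eq_fintype_card] at hcardX'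
    omega
  -- maximal homogeneous candidate
  set Fam : Set (Set R) :=
    {Y | IsHomogeneousSet G Y ∧ (0 : R) ∈ Y ∧ 2 ≤ Y.ncard ∧ Y ≠ univ} with hFam
  have hFamne : Fam.Nonempty := ⟨X', hhomX', h0X', by omega, hX'ne⟩
  obtain ⟨M, hMF, hMmax⟩ :=
    Set.Finite.exists_maximalFor Set.ncard Fam (toFinite _) hFamne
  obtain ⟨hhomM, h0M, h2M, hMne⟩ := hMF
  by_cases hA : ∀ x ∈ M, M ∪ ((fun a => a + -x) '' M) ≠ univ
  · -- M is a subgroup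
    have hMx : ∀ x ∈ M, ((fun a => a + -x) '' M) ⊆ M := by
      intro x hx
      set Mx : Set R := (fun a => a + -x) '' M with hMxdef
      have hhomMx : IsHomogeneousSet G Mx :=
        isHom_image (htrans_surj (-x)) (fun a b => hadj_trans (-x) a b) hhomM
      have hhomU : IsHomogeneousSet G (M ∪ Mx) :=
        isHom_union hhomM hhomMx ⟨x + -x, by simpa using h0M, ⟨x, hx, rfl⟩⟩
      have hsubU : M ⊆ M ∪ Mx := subset_union_left
      have hle : M.ncard ≤ (M ∪ Mx).ncard := ncard_le_ncard hsubU (toFinite _)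
      have hUF : (M ∪ Mx) ∈ Fam := ⟨hhomU, Or.inl h0M, le_trans h2M hle, hA x hx⟩
      have heqc := hMmax hUF hle
      have heq : M = M ∪ Mx :=
        Set.eq_of_subset_of_ncard_le hsubU heqc (toFinite _)
      intro y hy
      rw [heq]
      exact Or.inr hy
    have hsubM : ∀ a ∈ M, ∀ b ∈ M, a - b ∈ M := by
      intro a ha b hb
      exact hMx b hb ⟨a, ha, by rw [sub_eq_add_neg]⟩
    have hneM : ∃ x ∈ M, x ≠ 0 := by
      obtain ⟨m₁, hm₁, m₂, hm₂, hne⟩ : ∃ a ∈ M, ∃ b ∈ M, a ≠ b := by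
        rw [← Set.one_lt_ncard (toFinite _)]
        omega
      by_cases h1 : m₁ = 0
      · exact ⟨m₂, hm₂, fun h => hne (by rw [h1, h])⟩
      · exact ⟨m₁, hm₁, h1⟩
    exact subgroup_case hU hgen hsimple h0 hstab hSne hSnc M h0M hsubM hneM hMne hhomM
  · push_neg at hA
    obtain ⟨x, hxM, hMuniv⟩ := hA
    have hcard2 : Fintype.card R ≤ M.ncard + M.ncard := by
      have h1 : (univ : Set R).ncard = Fintype.card R := by rw [ncard_univ, Nat.card_eq_fintype_card]
      rw [← hMuniv] at h1
      have h2 := Set.ncard_union_le M ((fun a => a + -x) '' M)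
      have h3 : ((fun a => a + -x) '' M).ncard = M.ncard :=
        ncard_image_of_injective _ (add_left_injective _)
      omega
    have hno : ∀ v, v ∉ M → ∀ m ∈ M, ¬ G.Adj v m := by
      intro v hv
      rcases hhomM v hv with hall | hnone
      · exfalso
        have himg : ((fun m => v - m) '' M) ⊆ S := by
          rintro _ ⟨m, hm, rfl⟩
          have := hall m hm
          rw [hG, cayley_adj hsym] at this
          exact this.2
        have hinj : Function.Injective (fun m : R => v - m) := by
          intro a b h
          simpa using congrArg (fun z => v - z) h
        have hle : M.ncard ≤ S.ncard := by
          rw [← ncard_image_of_injective M hinj]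
          exact ncard_le_ncard himg (toFinite _)
        omega
      · exact hnone
    -- connectivity
    have hgenS : AddSubgroup.closure S = ⊤ := by
      have hl : ∀ w : Rˣ, w ∈ U → ∀ y ∈ AddSubgroup.closure S,
          (w : R) * y ∈ AddSubgroup.closure S := by
        intro w hw y hy
        induction hy using AddSubgroup.closure_induction with
        | mem z hz =>
          apply AddSubgroup.subset_closure
          have := hstab w hw 1 U.one_mem z hz
          simpa using this
        | zero => simpa using AddSubgroup.zero_mem _
        | add a b ha hb iha ihb => rw [mul_add]; exact AddSubgroup.add_mem _ iha ihb
        | neg a ha iha => rw [mul_neg]; exact AddSubgroup.neg_mem _ iha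
      have hr : ∀ w : Rˣ, w ∈ U → ∀ y ∈ AddSubgroup.closure S,
          y * (w : R) ∈ AddSubgroup.closure S := by
        intro w hw y hy
        induction hy using AddSubgroup.closure_induction with
        | mem z hz =>
          apply AddSubgroup.subset_closure
          have := hstab 1 U.one_mem w hw z hz
          simpa using this
        | zero => simpa using AddSubgroup.zero_mem _
        | add a b ha hb iha ihb => rw [add_mul]; exact AddSubgroup.add_mem _ iha ihb
        | neg a ha iha => rw [neg_mul]; exact AddSubgroup.neg_mem _ iha
      rcases biinv_dichotomy hgen hsimple (AddSubgroup.closure S) hl hr with hbot | htop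
      · exfalso
        obtain ⟨s, hs⟩ := hSne
        have hsmem : s ∈ AddSubgroup.closure S := AddSubgroup.subset_closure hs
        rw [hbot] at hsmem
        have : s = 0 := by simpa using hsmem
        rw [this] at hs
        exact h0 hs
      · exact htop
    obtain ⟨v₀, hv₀⟩ : ∃ v, v ∉ M := by
      by_contra h
      push_neg at h
      exact hMne (eq_univ_of_forall h)
    obtain ⟨w⟩ := cayley_reachable hgenS h0 0 v₀
    obtain ⟨p, hp, q, hq, hadj⟩ := walk_cross w h0M hv₀
    exact hno q hq p hp hadj.symm

end Key

section Final
variable {R : Type*} [Ring R]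

lemma walk_closure {S₀ : Set R} (hsym : ∀ s ∈ S₀, -s ∈ S₀) {a b : R}
    (w : (cayleyGraph S₀).Walk a b) (ha : a ∈ AddSubgroup.closure S₀) :
    b ∈ AddSubgroup.closure S₀ := by
  induction w with
  | nil => exact ha
  | @cons u v c h p ih =>
    apply ih
    have hadj := h
    rw [cayley_adj hsym] at hadj
    have hmem : u - v ∈ AddSubgroup.closure S₀ := AddSubgroup.subset_closure hadj.2
    have : v = u - (u - v) := by abel
    rw [this]
    exact AddSubgroup.sub_mem _ ha hmem

/-- The complement connection set is also invariant. -/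
lemma compl_stab {U : Subgroup Rˣ} {S : Set R}
    (hstab : ∀ u₁ ∈ U, ∀ u₂ ∈ U, ∀ s ∈ S, ((u₁ : Rˣ) : R) * s * ((u₂ : Rˣ) : R) ∈ S) :
    ∀ u₁ ∈ U, ∀ u₂ ∈ U, ∀ s ∈ {x : R | x ≠ 0 ∧ x ∉ S},
      ((u₁ : Rˣ) : R) * s * ((u₂ : Rˣ) : R) ∈ {x : R | x ≠ 0 ∧ x ∉ S} := by
  rintro u hu v hv s ⟨hs0, hsS⟩
  constructor
  · intro h
    apply hs0
    have := congrArg (fun z => ((u⁻¹ : Rˣ) : R) * z * ((v⁻¹ : Rˣ) : R)) h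
    simpa [hcancel u v s] using this
  · intro h
    exact hsS ((smul_mem_iff hstab hu hv s).mp h)

lemma adj_compl {S : Set R} (hsym : ∀ s ∈ S, -s ∈ S) (a b : R) :
    (cayleyGraph {x : R | x ≠ 0 ∧ x ∉ S}).Adj a b ↔ a ≠ b ∧ ¬ (cayleyGraph S).Adj a b := by
  have hsymT : ∀ s ∈ {x : R | x ≠ 0 ∧ x ∉ S}, -s ∈ {x : R | x ≠ 0 ∧ x ∉ S} := by
    rintro t ⟨ht0, htS⟩
    exact ⟨by simpa using ht0, fun h => htS (by simpa using hsym _ h)⟩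
  rw [cayley_adj hsymT, cayley_adj hsym]
  constructor
  · rintro ⟨hne, h1, h2⟩
    exact ⟨hne, fun h => h2 h.2⟩
  · rintro ⟨hne, h⟩
    refine ⟨hne, fun h' => hne (by simpa [sub_eq_zero] using h'), fun hS => h ⟨hne, hS⟩⟩

lemma hom_compl {S : Set R} (hsym : ∀ s ∈ S, -s ∈ S) {X : Set R}
    (hX : IsHomogeneousSet (cayleyGraph S) X) :
    IsHomogeneousSet (cayleyGraph {x : R | x ≠ 0 ∧ x ∉ S}) X := by
  intro v hv
  rcases hX v hv with hall | hnone
  · right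
    intro x hx hadj
    rw [adj_compl hsym] at hadj
    exact hadj.2 (hall x hx)
  · left
    intro x hx
    rw [adj_compl hsym]
    exact ⟨fun h => hv (h ▸ hx), hnone x hx⟩

end Final


section Key2
variable {R : Type*} [Ring R] [Fintype R] {U : Subgroup Rˣ}

lemma key' (hU : -1 ∈ U)
    (hgen : AddSubgroup.closure (unitsSet R U) = ⊤)
    (hsimple : ∀ W : AddSubgroup R, (∀ r : R, ∀ w ∈ W, r * w ∈ W) →
      (∀ r : R, ∀ w ∈ W, w * r ∈ W) → W = ⊥ ∨ W = ⊤)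
    {S : Set R} (h0 : (0 : R) ∉ S)
    (hstab : ∀ u₁ ∈ U, ∀ u₂ ∈ U, ∀ s ∈ S, ((u₁ : Rˣ) : R) * s * ((u₂ : Rˣ) : R) ∈ S)
    (hSne : S.Nonempty) (hSnc : S ≠ Set.univ \ {0}) :
    IsPrimeGraph (cayleyGraph S) := by
  classical
  have hsym : ∀ s ∈ S, -s ∈ S := by
    intro s hs
    have := hstab (-1) hU 1 U.one_mem s hs
    simpa using this
  by_cases hsmall : S.ncard ≤ {x : R | x ≠ 0 ∧ x ∉ S}.ncard
  · exact key hU hgen hsimple h0 hstab hSne hSnc hsmall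
  · have h0T : (0 : R) ∉ {x : R | x ≠ 0 ∧ x ∉ S} := fun h => h.1 rfl
    have hstabT := compl_stab hstab
    have hTne : {x : R | x ≠ 0 ∧ x ∉ S}.Nonempty := by
      rcases Set.eq_empty_or_nonempty {x : R | x ≠ 0 ∧ x ∉ S} with hemp | hne
      · exfalso
        apply hSnc
        ext x
        constructor
        · intro hx
          exact ⟨trivial, fun h => h0 (by rwa [mem_singleton_iff.mp h] at hx)⟩
        · rintro ⟨-, hx0⟩
          by_contra hxS
          have : x ∈ {x : R | x ≠ 0 ∧ x ∉ S} := ⟨fun h => hx0 (by simp [h]), hxS⟩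
          rw [hemp] at this
          exact this
      · exact hne
    have hTnc : {x : R | x ≠ 0 ∧ x ∉ S} ≠ Set.univ \ {0} := by
      intro h
      obtain ⟨s, hs⟩ := hSne
      have hs0 : s ≠ 0 := fun h' => h0 (h' ▸ hs)
      have hsT : s ∈ {x : R | x ≠ 0 ∧ x ∉ S} := by
        rw [h]
        exact ⟨trivial, by simpa using hs0⟩
      exact hsT.2 hs
    have hTT : {x : R | x ≠ 0 ∧ x ∉ {y : R | y ≠ 0 ∧ y ∉ S}} = S := by
      ext x
      simp only [mem_setOf_eq, not_and, not_not]
      constructor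
      · rintro ⟨hx0, h⟩
        exact h hx0
      · intro hxS
        exact ⟨fun h' => h0 (h' ▸ hxS), fun _ => hxS⟩
    have hsmallT : {x : R | x ≠ 0 ∧ x ∉ S}.ncard ≤
        {x : R | x ≠ 0 ∧ x ∉ {y : R | y ≠ 0 ∧ y ∉ S}}.ncard := by
      rw [hTT]
      omega
    have hkey := key hU hgen hsimple h0T hstabT hTne hTnc hsmallT
    rintro ⟨X, hX, h2, hlt⟩
    exact hkey ⟨X, hom_compl hsym hX, h2, hlt⟩

end Key2

theorem stmt4 {F : Type*} [Field F] [Fintype F] {n : ℕ} (hn : 2 < n)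
    (U : Subgroup (Matrix (Fin n) (Fin n) F)ˣ) (hU : -1 ∈ U)
    (hconnU : (cayleyGraph (unitsSet (Matrix (Fin n) (Fin n) F) U)).Connected)
    (S : Set (Matrix (Fin n) (Fin n) F))
    (h0 : (0 : Matrix (Fin n) (Fin n) F) ∉ S)
    (hstab : ∀ u₁ ∈ U, ∀ u₂ ∈ U, ∀ s ∈ S,
      ((u₁ : (Matrix (Fin n) (Fin n) F)ˣ) : Matrix (Fin n) (Fin n) F) * s *
        ((u₂ : (Matrix (Fin n) (Fin n) F)ˣ) : Matrix (Fin n) (Fin n) F) ∈ S)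
    (hSne : S.Nonempty)
    (hSnc : S ≠ Set.univ \ {0}) :
    IsPrimeGraph (cayleyGraph S)  := by
  classical
  haveI : Nonempty (Fin n) := ⟨⟨0, by omega⟩⟩
  have hsimple : ∀ W : AddSubgroup (Matrix (Fin n) (Fin n) F),
      (∀ r : Matrix (Fin n) (Fin n) F, ∀ w ∈ W, r * w ∈ W) →
      (∀ r : Matrix (Fin n) (Fin n) F, ∀ w ∈ W, w * r ∈ W) → W = ⊥ ∨ W = ⊤ := by
    intro W hl hr
    set I : TwoSidedIdeal (Matrix (Fin n) (Fin n) F) :=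
      TwoSidedIdeal.mk' (W : Set (Matrix (Fin n) (Fin n) F)) W.zero_mem
      (fun {a b} ha hb => W.add_mem ha hb) (fun {a} ha => W.neg_mem ha)
      (fun {x y} hy => hl x y hy) (fun {x y} hx => hr y x hx) with hI
    have hmem : ∀ z : Matrix (Fin n) (Fin n) F, z ∈ I ↔ z ∈ W := fun z =>
      TwoSidedIdeal.mem_mk' _ _ _ _ _ _ z
    have hso : IsSimpleOrder (TwoSidedIdeal (Matrix (Fin n) (Fin n) F)) := IsSimpleRing.simple
    rcases hso.eq_bot_or_eq_top I with h | h
    · left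
      ext z
      rw [AddSubgroup.mem_bot, ← hmem z, h, TwoSidedIdeal.mem_bot]
    · right
      ext z
      simp only [AddSubgroup.mem_top, iff_true]
      rw [← hmem z, h]
      exact TwoSidedIdeal.mem_top _
  have hsymU : ∀ s ∈ unitsSet (Matrix (Fin n) (Fin n) F) U,
      -s ∈ unitsSet (Matrix (Fin n) (Fin n) F) U := by
    rintro s ⟨u, hu, rfl⟩
    refine ⟨-u, ?_, by simp⟩
    have : (-1 : (Matrix (Fin n) (Fin n) F)ˣ) * u ∈ U := U.mul_mem hU hu
    rwa [neg_one_mul] at this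
  have hgen : AddSubgroup.closure (unitsSet (Matrix (Fin n) (Fin n) F) U) = ⊤ := by
    rw [eq_top_iff]
    intro r _
    obtain ⟨w⟩ := hconnU.preconnected 0 r
    exact walk_closure hsymU w (AddSubgroup.zero_mem _)
  exact key' hU hgen hsimple h0 hstab hSne hSnc
end

section
/- Let R be a finite ring whose Jacobson radical is zero, and let U be a subgroup of R^× with -1 ∈ U. If the Cayley graph Γ(R,U) and its complement graph are both connected, then Γ(R,U) is prime. -/
/-- The Jacobson radical: the intersection of all maximal left ideals. -/
def jacobsonRadical (R : Type*) [Ring R] : Ideal R :=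
  sInf {I : Ideal R | I.IsMaximal}

section Aux

lemma mem_unitsSet {R : Type*} [Ring R] {U : Subgroup Rˣ} {x : R} :
    x ∈ unitsSet R U ↔ ∃ w ∈ U, (w : R) = x := by
  simp [unitsSet]

lemma neg_mem_unitsSet {R : Type*} [Ring R] {U : Subgroup Rˣ} (hU : -1 ∈ U) {x : R}
    (hx : x ∈ unitsSet R U) : -x ∈ unitsSet R U := by
  obtain ⟨w, hw, rfl⟩ := mem_unitsSet.mp hx
  exact mem_unitsSet.mpr ⟨-w, by simpa using U.mul_mem hU hw, by simp⟩

lemma cayley_adj_s6 {R : Type*} [Ring R] {U : Subgroup Rˣ} (hU : -1 ∈ U) (a b : R) :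
    (cayleyGraph (unitsSet R U)).Adj a b ↔ a ≠ b ∧ a - b ∈ unitsSet R U := by
  rw [cayleyGraph, SimpleGraph.fromRel_adj]
  refine and_congr_right fun _ => ⟨?_, Or.inl⟩
  rintro (h | h)
  · exact h
  · simpa using neg_mem_unitsSet hU h

lemma reachable_invariant {V : Type*} {G : SimpleGraph V} (P : V → Prop)
    (h : ∀ a b, G.Adj a b → (P a ↔ P b)) :
    ∀ {x y : V}, G.Reachable x y → (P x ↔ P y) := by
  intro x y hr
  obtain ⟨w⟩ := hr
  induction w with
  | nil => rfl
  | cons h' _ ih => exact (h _ _ h').trans ih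

lemma sub_mem_closure_of_reachable {R : Type*} [Ring R] {S : Set R} {a b : R}
    (hr : (cayleyGraph S).Reachable a b) : b - a ∈ AddSubgroup.closure S := by
  obtain ⟨w⟩ := hr
  induction w with
  | nil => simpa using (AddSubgroup.closure S).zero_mem
  | @cons a c b h p ih =>
      have hca : c - a ∈ AddSubgroup.closure S := by
        rw [cayleyGraph, SimpleGraph.fromRel_adj] at h
        rcases h.2 with h' | h'
        · simpa using neg_mem (AddSubgroup.subset_closure h')
        · exact AddSubgroup.subset_closure h'
      have hba : b - a = (b - c) + (c - a) := by abel
      rw [hba]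
      exact add_mem ih hca

lemma hom_image {V : Type*} {G : SimpleGraph V} {f : V → V} (hb : Function.Bijective f)
    (ha : ∀ a b, G.Adj (f a) (f b) ↔ G.Adj a b) {X : Set V}
    (hX : IsHomogeneousSet G X) : IsHomogeneousSet G (f '' X) := by
  intro v hv
  obtain ⟨w, rfl⟩ := hb.2 v
  have hw : w ∉ X := fun h => hv ⟨w, h, rfl⟩
  rcases hX w hw with h | h
  · left; rintro x ⟨y, hy, rfl⟩; exact (ha w y).mpr (h y hy)
  · right; rintro x ⟨y, hy, rfl⟩ hadj; exact h y hy ((ha w y).mp hadj)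

lemma hom_union {V : Type*} {G : SimpleGraph V} {X Y : Set V} {z : V}
    (hX : IsHomogeneousSet G X) (hY : IsHomogeneousSet G Y)
    (hzX : z ∈ X) (hzY : z ∈ Y) : IsHomogeneousSet G (X ∪ Y) := by
  intro v hv
  have hvX : v ∉ X := fun h => hv (Or.inl h)
  have hvY : v ∉ Y := fun h => hv (Or.inr h)
  rcases hX v hvX with hA | hN
  · left
    rintro x (hx | hx)
    · exact hA x hx
    · rcases hY v hvY with h | h
      · exact h x hx
      · exact absurd (hA z hzX) (h z hzY)
  · right
    rintro x (hx | hx) hadj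
    · exact hN x hx hadj
    · rcases hY v hvY with h | h
      · exact absurd (h z hzY) (hN z hzX)
      · exact h x hx hadj

lemma union_ne_univ_of_hom {V : Type*} {G : SimpleGraph V} {X Y : Set V} {z : V}
    (hX : IsHomogeneousSet G X) (hY : IsHomogeneousSet G Y)
    (_hzX : z ∈ X) (hzY : z ∈ Y) (hXu : X ≠ Set.univ) (hYu : Y ≠ Set.univ)
    (hc : G.Connected) (hcc : Gᶜ.Connected) : X ∪ Y ≠ Set.univ := by
  intro huniv
  obtain ⟨y₀, hy₀⟩ : ∃ v, v ∉ X := by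
    by_contra h; push_neg at h; exact hXu (Set.eq_univ_of_forall h)
  obtain ⟨w₀, hw₀⟩ : ∃ v, v ∉ Y := by
    by_contra h; push_neg at h; exact hYu (Set.eq_univ_of_forall h)
  have hy₀Y : y₀ ∈ Y := (Set.eq_univ_iff_forall.mp huniv y₀).resolve_left hy₀
  have hmemX : ∀ v, v ∉ Y → v ∈ X := fun v hv =>
    (Set.eq_univ_iff_forall.mp huniv v).resolve_right hv
  rcases hX y₀ hy₀ with hall | hnone
  · have key : ∀ v, v ∉ Y → ∀ x ∈ Y, G.Adj v x := by
      intro v hv x hx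
      rcases hY v hv with h | h
      · exact h x hx
      · exact absurd (hall v (hmemX v hv)).symm (h y₀ hy₀Y)
    have hinv : ∀ a b, Gᶜ.Adj a b → ((a ∈ Y) ↔ (b ∈ Y)) := by
      intro a b hab
      by_contra hne
      rcases (by tauto : (a ∈ Y ∧ b ∉ Y) ∨ (a ∉ Y ∧ b ∈ Y)) with ⟨ha, hb⟩ | ⟨ha, hb⟩
      · exact ((G.compl_adj a b).mp hab).2 (key b hb a ha).symm
      · exact ((G.compl_adj a b).mp hab).2 (key a ha b hb)
    have := reachable_invariant (· ∈ Y) hinv (hcc.preconnected z w₀)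
    exact hw₀ (this.mp hzY)
  · have key : ∀ v, v ∉ Y → ∀ x ∈ Y, ¬ G.Adj v x := by
      intro v hv x hx
      rcases hY v hv with h | h
      · exact absurd (h y₀ hy₀Y).symm (hnone v (hmemX v hv))
      · exact h x hx
    have hinv : ∀ a b, G.Adj a b → ((a ∈ Y) ↔ (b ∈ Y)) := by
      intro a b hab
      by_contra hne
      rcases (by tauto : (a ∈ Y ∧ b ∉ Y) ∨ (a ∉ Y ∧ b ∈ Y)) with ⟨ha, hb⟩ | ⟨ha, hb⟩
      · exact key b hb a ha hab.symm
      · exact key a ha b hb hab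
    have := reachable_invariant (· ∈ Y) hinv (hc.preconnected z w₀)
    exact hw₀ (this.mp hzY)

end Aux

theorem stmt6 {R : Type*} [Ring R] [Fintype R]
    (hrad : jacobsonRadical R = ⊥)
    (U : Subgroup Rˣ) (hU : -1 ∈ U)
    (hconn : (cayleyGraph (unitsSet R U)).Connected)
    (hanti : (cayleyGraph (unitsSet R U))ᶜ.Connected) :
    IsPrimeGraph (cayleyGraph (unitsSet R U)) := by
  classical
  rintro ⟨X, hX, hX2, hXlt⟩
  set S := unitsSet R U with hSdef
  set G := cayleyGraph S with hGdef
  haveI : Nontrivial R := Fintype.one_lt_card_iff_nontrivial.mp (by omega)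
  have adj_iff : ∀ a b : R, G.Adj a b ↔ a ≠ b ∧ a - b ∈ S := cayley_adj_s6 hU
  -- cardinality helpers
  have hproper_card : ∀ Z : Set R, Z ≠ Set.univ → Z.ncard < Fintype.card R := by
    intro Z hZ
    have := Set.ncard_lt_ncard (Set.ssubset_univ_iff.mpr hZ) Set.finite_univ
    simpa [Set.ncard_univ, Nat.card_eq_fintype_card] using this
  have hcard_proper : ∀ Z : Set R, Z.ncard < Fintype.card R → Z ≠ Set.univ := by
    intro Z h hc
    rw [hc] at h
    simp [Set.ncard_univ, Nat.card_eq_fintype_card] at h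
  -- translation automorphisms
  have hsubbij : ∀ c : R, Function.Bijective (fun x : R => x - c) :=
    fun c => ⟨fun a b h => by simpa using congrArg (· + c) h,
              fun y => ⟨y + c, add_sub_cancel_right y c⟩⟩
  have hsubadj : ∀ c a b : R, G.Adj (a - c) (b - c) ↔ G.Adj a b := by
    intro c a b
    rw [adj_iff, adj_iff, sub_sub_sub_cancel_right]
    simp [sub_left_inj]
  -- the collection of proper homogeneous sets containing 0
  set C : Set (Set R) := {Z | IsHomogeneousSet G Z ∧ 0 ∈ Z ∧ Z ≠ Set.univ} with hCdef
  obtain ⟨x₀, hx₀⟩ : X.Nonempty := Set.nonempty_of_ncard_ne_zero (by omega)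
  have hX'C : (fun x => x - x₀) '' X ∈ C := by
    refine ⟨hom_image (hsubbij x₀) (hsubadj x₀) hX, ⟨x₀, hx₀, sub_self x₀⟩, ?_⟩
    exact hcard_proper _ (by rwa [Set.ncard_image_of_injective _ (hsubbij x₀).1])
  obtain ⟨H, hHC, hHmax⟩ : ∃ H ∈ C, ∀ Z ∈ C, H.ncard ≤ Z.ncard → H.ncard = Z.ncard := by
    obtain ⟨H, hHC, hHmax⟩ := Set.Finite.exists_maximalFor Set.ncard C (Set.toFinite C) ⟨_, hX'C⟩
    exact ⟨H, hHC, fun Z hZ hle => le_antisymm hle (hHmax hZ hle)⟩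
  obtain ⟨hHhom, hH0, hHuniv⟩ := hHC
  -- maximality: every element of C is contained in H
  have hsubH : ∀ Z ∈ C, Z ⊆ H := by
    intro Z hZ
    obtain ⟨hZhom, hZ0, hZuniv⟩ := hZ
    have hun : H ∪ Z ∈ C :=
      ⟨hom_union hHhom hZhom hH0 hZ0, Or.inl hH0,
       union_ne_univ_of_hom hHhom hZhom hH0 hZ0 hHuniv hZuniv hconn hanti⟩
    have hle : H.ncard ≤ (H ∪ Z).ncard :=
      Set.ncard_le_ncard Set.subset_union_left (Set.toFinite _)
    have heq := hHmax _ hun hle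
    have hHeq : H = H ∪ Z :=
      Set.eq_of_subset_of_ncard_le Set.subset_union_left heq.ge (Set.toFinite _)
    rw [hHeq]
    exact Set.subset_union_right
  have hH2 : 2 ≤ H.ncard := by
    have := Set.ncard_le_ncard (hsubH _ hX'C) (Set.toFinite H)
    rw [Set.ncard_image_of_injective _ (hsubbij x₀).1] at this
    omega
  -- H is an additive subgroup
  have hHsub : ∀ h ∈ H, ∀ a ∈ H, a - h ∈ H := by
    intro h hh a ha
    have hm : (fun x => x - h) '' H ∈ C := by
      refine ⟨hom_image (hsubbij h) (hsubadj h) hHhom, ⟨h, hh, sub_self h⟩, ?_⟩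
      refine hcard_proper _ ?_
      rw [Set.ncard_image_of_injective _ (hsubbij h).1]
      exact hproper_card H hHuniv
    exact hsubH _ hm ⟨a, ha, rfl⟩
  have hHneg : ∀ h ∈ H, -h ∈ H := fun h hh => by simpa using hHsub h hh 0 hH0
  have hHadd : ∀ a ∈ H, ∀ b ∈ H, a + b ∈ H := by
    intro a ha b hb
    simpa [sub_neg_eq_add] using hHsub (-b) (hHneg b hb) a ha
  -- H is invariant under left multiplication by U
  have hmulbij : ∀ w : Rˣ, Function.Bijective (fun x : R => (w : R) * x) := by
    intro w
    refine ⟨fun a b h => ?_, fun y => ⟨(↑w⁻¹ : R) * y, by simp⟩⟩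
    have := congrArg (fun y => (↑w⁻¹ : R) * y) h
    simpa using this
  have hmulS : ∀ w ∈ U, ∀ x : R, ((w : R) * x ∈ S ↔ x ∈ S) := by
    intro w hw x
    constructor
    · intro hx
      obtain ⟨v, hv, hvx⟩ := mem_unitsSet.mp hx
      refine mem_unitsSet.mpr ⟨w⁻¹ * v, U.mul_mem (U.inv_mem hw) hv, ?_⟩
      rw [Units.val_mul, hvx, Units.inv_mul_cancel_left]
    · intro hx
      obtain ⟨v, hv, rfl⟩ := mem_unitsSet.mp hx
      exact mem_unitsSet.mpr ⟨w * v, U.mul_mem hw hv, by rw [Units.val_mul]⟩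
  have hmuladj : ∀ w ∈ U, ∀ a b : R, (G.Adj ((w : R) * a) ((w : R) * b) ↔ G.Adj a b) := by
    intro w hw a b
    rw [adj_iff, adj_iff, ← mul_sub, hmulS w hw]
    exact and_congr_left' (hmulbij w).1.ne_iff
  have hUmulH : ∀ w ∈ U, ∀ h ∈ H, (w : R) * h ∈ H := by
    intro w hw h hh
    have hm : (fun x : R => (w : R) * x) '' H ∈ C := by
      refine ⟨hom_image (hmulbij w) (hmuladj w hw) hHhom, ⟨0, hH0, mul_zero _⟩, ?_⟩
      refine hcard_proper _ ?_
      rw [Set.ncard_image_of_injective _ (hmulbij w).1]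
      exact hproper_card H hHuniv
    exact hsubH _ hm ⟨h, hh, rfl⟩
  -- H is a left ideal
  have hclos : ∀ r : R, r ∈ AddSubgroup.closure S := by
    intro r
    have := sub_mem_closure_of_reachable (hconn.preconnected 0 r)
    simpa using this
  have hRmulH : ∀ (r : R), ∀ h ∈ H, r * h ∈ H := by
    intro r h hh
    refine AddSubgroup.closure_induction (p := fun r _ => r * h ∈ H)
      ?_ ?_ ?_ ?_ (hclos r)
    · intro s hs
      obtain ⟨w, hw, rfl⟩ := mem_unitsSet.mp hs
      exact hUmulH w hw h hh
    · simpa using hH0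
    · intro a b _ _ ha hb
      rw [add_mul]
      exact hHadd _ ha _ hb
    · intro a _ ha
      rw [neg_mul]
      exact hHneg _ ha
  -- 1 ∉ H, and 1 - H consists of units
  have h1S : (1 : R) ∈ S := mem_unitsSet.mpr ⟨1, U.one_mem, rfl⟩
  have h1H : (1 : R) ∉ H := by
    intro h1
    refine hHuniv (Set.eq_univ_of_forall fun r => ?_)
    simpa using hRmulH r 1 h1
  have hadj10 : G.Adj 1 0 := (adj_iff 1 0).mpr ⟨one_ne_zero, by simpa using h1S⟩
  have hunit : ∀ h ∈ H, IsUnit (1 - h) := by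
    rcases hHhom 1 h1H with hall | hnone
    · intro h hh
      obtain ⟨w, hw, hwe⟩ := mem_unitsSet.mp ((adj_iff 1 h).mp (hall h hh)).2
      exact ⟨w, hwe⟩
    · exact absurd hadj10 (hnone 0 hH0)
  -- H is contained in the Jacobson radical, hence zero
  have hzero : ∀ h ∈ H, h = 0 := by
    intro h hh
    have hmem : h ∈ jacobsonRadical R := by
      rw [jacobsonRadical]
      refine Submodule.mem_sInf.mpr fun I hI => ?_
      have hImax : Ideal.IsMaximal I := hI
      by_contra hnI
      have hlt : I < I ⊔ Ideal.span {h} := by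
        refine lt_of_le_of_ne le_sup_left fun e => hnI ?_
        rw [e]
        exact Submodule.mem_sup_right (Ideal.subset_span rfl)
      have htop : I ⊔ Ideal.span {h} = ⊤ := hImax.out.2 _ hlt
      have h1mem : (1 : R) ∈ I ⊔ Ideal.span {h} := htop ▸ Submodule.mem_top
      obtain ⟨m, hm, y, hy, hmy⟩ := Submodule.mem_sup.mp h1mem
      obtain ⟨r, hr⟩ := Submodule.mem_span_singleton.mp hy
      have hyH : y ∈ H := by
        rw [← hr, smul_eq_mul]
        exact hRmulH r h hh
      have hmu : IsUnit m := by
        have : m = 1 - y := eq_sub_of_add_eq hmy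
        rw [this]
        exact hunit y hyH
      exact hImax.ne_top (Ideal.eq_top_of_isUnit_mem I hm hmu)
    rw [hrad] at hmem
    simpa using hmem
  have hHsing : H ⊆ {0} := fun h hh => hzero h hh
  have := Set.ncard_le_ncard hHsing (Set.finite_singleton 0)
  rw [Set.ncard_singleton] at this
  omega
end
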